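/- Let L be a positive integer and ε ∈ (0, 1/(2L)). Then there exist continuous functions d_l^{(c)}, d̃_l^{(c)} : (0,1] → [0,1] for c ∈ {0,1} and l ∈ {1,...,L}, each extending continuously by 0 at 0, such that: (a) ‖d̃_l^{(c)}(t)·t − (l/L)·d̃_l^{(c)}(t)‖_∞ < 1/L for all c,l; (b) d_l^{(c)}(t)·d̃_l^{(c)}(t) = d_l^{(c)}(t) for all t and all c,l; (c) d̃_l^{(c)}·d̃_{l'}^{(c)} = 0 whenever l ≠ l'; (e) sup_{t ∈ (0,1]} |t − Σ_{c=0}^{1} Σ_{l=1}^{L} (l/L)·d_l^{(c)}(t)| ≤ 1/L. -/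

import Mathlib

open Set Finset

noncomputable def clamp01 (x : ℝ) : ℝ := max 0 (min 1 x)

lemma clamp01_nonneg (x : ℝ) : 0 ≤ clamp01 x := le_max_left _ _

lemma clamp01_le_one (x : ℝ) : clamp01 x ≤ 1 := max_le zero_le_one (min_le_left _ _)

lemma clamp01_mem (x : ℝ) : clamp01 x ∈ Icc (0:ℝ) 1 := ⟨clamp01_nonneg x, clamp01_le_one x⟩

lemma clamp01_of_nonpos {x : ℝ} (h : x ≤ 0) : clamp01 x = 0 := by
  unfold clamp01
  rw [max_eq_left]
  exact (min_le_right _ _).trans h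

lemma clamp01_of_one_le {x : ℝ} (h : 1 ≤ x) : clamp01 x = 1 := by
  unfold clamp01
  rw [min_eq_left h, max_eq_right zero_le_one]

lemma clamp01_of_mem {x : ℝ} (h0 : 0 ≤ x) (h1 : x ≤ 1) : clamp01 x = x := by
  unfold clamp01
  rw [min_eq_right h1, max_eq_right h0]

lemma clamp01_add_one {u v : ℝ} (h : u + v = 1) : clamp01 u + clamp01 v = 1 := by
  rcases le_or_gt u 0 with hu | hu
  · rw [clamp01_of_nonpos hu, clamp01_of_one_le (by linarith : 1 ≤ v)]; ring
  rcases le_or_gt 1 u with hu1 | hu1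
  · rw [clamp01_of_one_le hu1, clamp01_of_nonpos (by linarith : v ≤ 0)]; ring
  · rw [clamp01_of_mem hu.le hu1.le, clamp01_of_mem (by linarith) (by linarith)]
    exact h

lemma clamp01_min_left {A B : ℝ} (h : 1 ≤ A) : clamp01 (min A B) = clamp01 B := by
  rcases le_total B A with hBA | hBA
  · rw [min_eq_right hBA]
  · rw [min_eq_left hBA, clamp01_of_one_le h, clamp01_of_one_le (h.trans hBA)]

lemma clamp01_min_right {A B : ℝ} (h : 1 ≤ B) : clamp01 (min A B) = clamp01 A := by
  rw [min_comm]; exact clamp01_min_left h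

lemma clamp01_continuous : Continuous clamp01 :=
  continuous_const.max (continuous_const.min continuous_id)

lemma bump_final {Lr : ℝ} (hLr : 0 < Lr) {t kk x : ℝ} (hx0 : 0 ≤ x) (hx1 : x ≤ 1)
    (hlt : kk/Lr < t) (hle : t ≤ (kk+1)/Lr) :
    |t - (kk/Lr * (1 - x) + (kk+1)/Lr * x)| ≤ 1/Lr := by
  have hexp : kk/Lr * (1 - x) + (kk+1)/Lr * x = kk/Lr + (1/Lr)*x := by ring
  have hub : (1/Lr)*x ≤ (1/Lr)*1 := mul_le_mul_of_nonneg_left hx1 (by positivity)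
  have hlb : 0 ≤ (1/Lr)*x := mul_nonneg (by positivity) hx0
  have h : (kk+1)/Lr = kk/Lr + 1/Lr := by ring
  have hkk : t ≤ kk/Lr + 1/Lr := by rw [← h]; exact hle
  rw [hexp, abs_le]
  constructor <;> linarith

theorem bump_functions_exist
    (L : ℕ) (hL : 0 < L) (ε : ℝ) (hε : 0 < ε) (hε' : ε < 1 / (2 * L)) :
    ∃ d dt : Fin 2 → ℕ → ℝ → ℝ,
      (∀ c l, Continuous (d c l) ∧ Continuous (dt c l)) ∧
      (∀ c l, d c l 0 = 0 ∧ dt c l 0 = 0) ∧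
      (∀ c l t, t ∈ Ioc (0:ℝ) 1 → d c l t ∈ Icc (0:ℝ) 1 ∧ dt c l t ∈ Icc (0:ℝ) 1) ∧
      -- (a)
      (∀ c, ∀ l, 1 ≤ l → l ≤ L → ∀ t ∈ Ioc (0:ℝ) 1,
        |dt c l t * t - (l / L : ℝ) * dt c l t| < 1 / L) ∧
      -- (b)
      (∀ c, ∀ l, 1 ≤ l → l ≤ L → ∀ t ∈ Ioc (0:ℝ) 1,
        d c l t * dt c l t = d c l t) ∧
      -- (c)
      (∀ c, ∀ l, 1 ≤ l → l ≤ L → ∀ l', 1 ≤ l' → l' ≤ L → l ≠ l' →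
        ∀ t ∈ Ioc (0:ℝ) 1, dt c l t * dt c l' t = 0) ∧
      -- (e)
      (∀ t ∈ Ioc (0:ℝ) 1,
        |t - ∑ c : Fin 2, ∑ l ∈ Finset.Icc 1 L, (l / L : ℝ) * d c l t| ≤ 1 / L) := by
  have hL0 : (0:ℝ) < L := by exact_mod_cast hL
  have hLinv : (0:ℝ) < 1 / L := by positivity
  have h2e : 2 * ε < 1 / (L:ℝ) := by
    have h1 : (2:ℝ) * (1 / (2 * L)) = 1 / L := by field_simp
    nlinarith [hε']
  set a : ℝ := 1 / (L:ℝ) - ε with ha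
  set r : ℝ := 1 / (L:ℝ) - 2 * ε with hr
  have hr0 : 0 < r := by rw [hr]; linarith
  have ha0 : 0 < a := by rw [ha]; linarith
  have ha1 : a < 1 / (L:ℝ) := by rw [ha]; linarith
  have har : r ≤ a := by rw [ha, hr]; linarith
  -- the bump functions
  set F : ℕ → ℝ → ℝ := fun l t =>
    clamp01 (min ((t - ((l:ℝ)/L - a))/r) (((l:ℝ)/L + a - t)/r)) with hF
  set G : ℕ → ℝ → ℝ := fun l t =>
    clamp01 (min ((t - ((l:ℝ)/L - 1/L))/ε) (((l:ℝ)/L + 1/L - t)/ε)) with hG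
  set D : Fin 2 → ℕ → ℝ → ℝ := fun c l t =>
    if l % 2 = c.val ∧ 1 ≤ l then F l t else 0 with hD
  set Dt : Fin 2 → ℕ → ℝ → ℝ := fun c l t =>
    if l % 2 = c.val ∧ 1 ≤ l then G l t else 0 with hDt
  -- basic facts
  have hFmem : ∀ (l : ℕ) (t : ℝ), F l t ∈ Icc (0:ℝ) 1 := by
    intro l t; simp only [hF]; exact clamp01_mem _
  have hGmem : ∀ (l : ℕ) (t : ℝ), G l t ∈ Icc (0:ℝ) 1 := by
    intro l t; simp only [hG]; exact clamp01_mem _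
  have hFzero : ∀ (l : ℕ) (t : ℝ), (t ≤ (l:ℝ)/L - a ∨ (l:ℝ)/L + a ≤ t) → F l t = 0 := by
    intro l t h
    simp only [hF]
    rcases h with h | h
    · exact clamp01_of_nonpos ((min_le_left _ _).trans
        (div_nonpos_of_nonpos_of_nonneg (by linarith) hr0.le))
    · exact clamp01_of_nonpos ((min_le_right _ _).trans
        (div_nonpos_of_nonpos_of_nonneg (by linarith) hr0.le))
  have hGzero : ∀ (l : ℕ) (t : ℝ), (t ≤ (l:ℝ)/L - 1/L ∨ (l:ℝ)/L + 1/L ≤ t) → G l t = 0 := by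
    intro l t h
    simp only [hG]
    rcases h with h | h
    · exact clamp01_of_nonpos ((min_le_left _ _).trans
        (div_nonpos_of_nonpos_of_nonneg (by linarith) hε.le))
    · exact clamp01_of_nonpos ((min_le_right _ _).trans
        (div_nonpos_of_nonpos_of_nonneg (by linarith) hε.le))
  have hGone : ∀ (l : ℕ) (t : ℝ), (l:ℝ)/L - a < t → t < (l:ℝ)/L + a → G l t = 1 := by
    intro l t h1 h2
    simp only [hG]
    apply clamp01_of_one_le
    refine le_min ?_ ?_
    · exact (one_le_div hε).mpr (by rw [ha] at h1; linarith)
    · exact (one_le_div hε).mpr (by rw [ha] at h2; linarith)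
  have hone_div_le : ∀ l : ℕ, 1 ≤ l → (1:ℝ)/L ≤ (l:ℝ)/L := by
    intro l hl
    have : (1:ℝ) ≤ (l:ℝ) := by exact_mod_cast hl
    gcongr
  refine ⟨D, Dt, ?_, ?_, ?_, ?_, ?_, ?_, ?_⟩
  · -- continuity
    intro c l
    constructor
    · simp only [hD]
      by_cases h : l % 2 = c.val ∧ 1 ≤ l
      · simp only [if_pos h, hF]
        exact clamp01_continuous.comp
          (((continuous_id.sub continuous_const).div_const r).min
            ((continuous_const.sub continuous_id).div_const r))
      · simp only [if_neg h]; exact continuous_const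
    · simp only [hDt]
      by_cases h : l % 2 = c.val ∧ 1 ≤ l
      · simp only [if_pos h, hG]
        exact clamp01_continuous.comp
          (((continuous_id.sub continuous_const).div_const ε).min
            ((continuous_const.sub continuous_id).div_const ε))
      · simp only [if_neg h]; exact continuous_const
  · -- value at 0
    intro c l
    constructor
    · simp only [hD]
      by_cases h : l % 2 = c.val ∧ 1 ≤ l
      · rw [if_pos h]
        exact hFzero l 0 (Or.inl (by have := hone_div_le l h.2; linarith))
      · rw [if_neg h]
    · simp only [hDt]
      by_cases h : l % 2 = c.val ∧ 1 ≤ l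
      · rw [if_pos h]
        exact hGzero l 0 (Or.inl (by have := hone_div_le l h.2; linarith))
      · rw [if_neg h]
  · -- range
    intro c l t _
    constructor
    · simp only [hD]
      by_cases h : l % 2 = c.val ∧ 1 ≤ l
      · rw [if_pos h]; exact hFmem l t
      · rw [if_neg h]; exact ⟨le_refl 0, zero_le_one⟩
    · simp only [hDt]
      by_cases h : l % 2 = c.val ∧ 1 ≤ l
      · rw [if_pos h]; exact hGmem l t
      · rw [if_neg h]; exact ⟨le_refl 0, zero_le_one⟩
  · -- (a)
    intro c l hl1 _ t _
    simp only [hDt]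
    by_cases h : l % 2 = c.val ∧ 1 ≤ l
    · rw [if_pos h]
      rcases le_or_gt (1/(L:ℝ)) (t - (l:ℝ)/L) with hfar | hnear
      · rw [hGzero l t (Or.inr (by linarith))]
        simpa using hLinv
      rcases le_or_gt (t - (l:ℝ)/L) (-(1/(L:ℝ))) with hfar | hnear'
      · rw [hGzero l t (Or.inl (by linarith))]
        simpa using hLinv
      · have hw0 := (hGmem l t).1
        have hw1 := (hGmem l t).2
        rw [show G l t * t - (l:ℝ)/L * G l t = G l t * (t - (l:ℝ)/L) from by ring,
          abs_mul, abs_of_nonneg hw0]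
        have habs : |t - (l:ℝ)/L| < 1/L := abs_lt.mpr ⟨by linarith, by linarith⟩
        nlinarith [abs_nonneg (t - (l:ℝ)/L)]
    · rw [if_neg h]
      simpa using hLinv
  · -- (b)
    intro c l hl1 _ t _
    simp only [hD, hDt]
    by_cases h : l % 2 = c.val ∧ 1 ≤ l
    · rw [if_pos h, if_pos h]
      rcases le_or_gt t ((l:ℝ)/L - a) with hc1 | hc1
      · rw [hFzero l t (Or.inl hc1)]; ring
      rcases le_or_gt ((l:ℝ)/L + a) t with hc2 | hc2
      · rw [hFzero l t (Or.inr hc2)]; ring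
      · rw [hGone l t hc1 hc2]; ring
    · rw [if_neg h, if_neg h]; ring
  · -- (c)
    intro c l hl1 _ l' hl'1 _ hne t _
    simp only [hDt]
    by_cases h : l % 2 = c.val ∧ 1 ≤ l
    · by_cases h' : l' % 2 = c.val ∧ 1 ≤ l'
      · rw [if_pos h, if_pos h']
        have hsep : l + 2 ≤ l' ∨ l' + 2 ≤ l := by
          obtain ⟨hp, _⟩ := h; obtain ⟨hp', _⟩ := h'; omega
        rcases hsep with hs | hs
        · have hsR : (l:ℝ) + 2 ≤ (l':ℝ) := by exact_mod_cast hs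
          rcases le_total t ((l:ℝ)/L + 1/L) with hts | hts
          · rw [hGzero l' t (Or.inl (by
              have h1 : ((l:ℝ)+1)/L ≤ ((l':ℝ)-1)/L := by gcongr; linarith
              have e1 : ((l:ℝ)+1)/L = (l:ℝ)/L + 1/L := by ring
              have e2 : ((l':ℝ)-1)/L = (l':ℝ)/L - 1/L := by ring
              linarith))]
            ring
          · rw [hGzero l t (Or.inr hts)]; ring
        · have hsR : (l':ℝ) + 2 ≤ (l:ℝ) := by exact_mod_cast hs
          rcases le_total t ((l':ℝ)/L + 1/L) with hts | hts
          · rw [hGzero l t (Or.inl (by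
              have h1 : ((l':ℝ)+1)/L ≤ ((l:ℝ)-1)/L := by gcongr; linarith
              have e1 : ((l':ℝ)+1)/L = (l':ℝ)/L + 1/L := by ring
              have e2 : ((l:ℝ)-1)/L = (l:ℝ)/L - 1/L := by ring
              linarith))]
            ring
          · rw [hGzero l' t (Or.inr hts)]; ring
      · rw [if_neg h']; ring
    · rw [if_neg h]; ring
  · -- (e)
    intro t ht
    obtain ⟨ht0, ht1⟩ := ht
    -- collapse the sum over c
    have hcollapse : ∑ c : Fin 2, ∑ l ∈ Finset.Icc 1 L, ((l:ℝ) / L) * D c l t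
        = ∑ l ∈ Finset.Icc 1 L, ((l:ℝ) / L) * F l t := by
      rw [Fin.sum_univ_two, ← Finset.sum_add_distrib]
      refine Finset.sum_congr rfl fun l hl => ?_
      have hl1 : 1 ≤ l := (Finset.mem_Icc.mp hl).1
      simp only [hD, show ((0:Fin 2)).val = 0 from rfl, show ((1:Fin 2)).val = 1 from rfl]
      rcases Nat.mod_two_eq_zero_or_one l with hpar | hpar
      · rw [if_pos ⟨hpar, hl1⟩, if_neg (by omega)]; ring
      · rw [if_neg (by omega), if_pos ⟨hpar, hl1⟩]; ring
    rw [hcollapse]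
    -- locate t : find k with k/L < t ≤ (k+1)/L
    obtain ⟨k, hkL, hklt, hkge⟩ :
        ∃ k : ℕ, k + 1 ≤ L ∧ (k:ℝ)/L < t ∧ t ≤ ((k:ℝ)+1)/L := by
      have hpos : (0:ℝ) < t * L := mul_pos ht0 hL0
      have hm1 : 1 ≤ ⌈t * (L:ℝ)⌉₊ := Nat.ceil_pos.mpr hpos
      have hmL : ⌈t * (L:ℝ)⌉₊ ≤ L := Nat.ceil_le.mpr (by nlinarith)
      have hmub : t * L ≤ (⌈t * (L:ℝ)⌉₊:ℝ) := Nat.le_ceil _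
      have hmlb : (⌈t * (L:ℝ)⌉₊:ℝ) < t * L + 1 := Nat.ceil_lt_add_one hpos.le
      have hcast : ((⌈t * (L:ℝ)⌉₊ - 1 : ℕ):ℝ) = (⌈t * (L:ℝ)⌉₊:ℝ) - 1 := by
        rw [Nat.cast_sub hm1, Nat.cast_one]
      refine ⟨⌈t * (L:ℝ)⌉₊ - 1, by omega, ?_, ?_⟩
      · rw [div_lt_iff₀ hL0, hcast]; linarith
      · rw [le_div_iff₀ hL0, hcast]; linarith
    -- reduce the sum to the two relevant terms
    have hpair : ∑ l ∈ Finset.Icc 1 L, ((l:ℝ) / L) * F l t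
        = ((k:ℝ)/L) * F k t + (((k:ℝ)+1)/L) * F (k+1) t := by
      rcases Nat.eq_zero_or_pos k with hk0 | hk1
      · subst hk0
        have hsub : ({1} : Finset ℕ) ⊆ Finset.Icc 1 L := by
          intro x hx
          simp only [Finset.mem_singleton] at hx
          subst hx
          exact Finset.mem_Icc.mpr ⟨le_refl 1, hL⟩
        have hvan : ∀ l ∈ Finset.Icc 1 L, l ∉ ({1} : Finset ℕ) → ((l:ℝ)/L) * F l t = 0 := by
          intro l hl hnl
          simp only [Finset.mem_singleton] at hnl
          have hl2 : 2 ≤ l := by have := (Finset.mem_Icc.mp hl).1; omega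
          have hl2R : (2:ℝ) ≤ (l:ℝ) := by exact_mod_cast hl2
          have ht1L : t ≤ 1/(L:ℝ) := by
            have := hkge; simp only [Nat.cast_zero] at this; linarith
          rw [hFzero l t (Or.inl (by
            have h2L : (2:ℝ)/L ≤ (l:ℝ)/L := by gcongr
            have e : (2:ℝ)/L = 1/L + 1/L := by ring
            linarith))]
          ring
        rw [← Finset.sum_subset hsub hvan, Finset.sum_singleton]
        norm_num
      · have hsub : ({k, k+1} : Finset ℕ) ⊆ Finset.Icc 1 L := by
          intro x hx
          simp only [Finset.mem_insert, Finset.mem_singleton] at hx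
          rcases hx with rfl | rfl <;> (rw [Finset.mem_Icc]; omega)
        have hvan : ∀ l ∈ Finset.Icc 1 L, l ∉ ({k, k+1} : Finset ℕ) →
            ((l:ℝ)/L) * F l t = 0 := by
          intro l hl hnl
          simp only [Finset.mem_insert, Finset.mem_singleton, not_or] at hnl
          obtain ⟨hne1, hne2⟩ := hnl
          obtain ⟨hll, hlu⟩ := Finset.mem_Icc.mp hl
          rcases (by omega : l + 1 ≤ k ∨ k + 2 ≤ l) with hs | hs
          · have hsR : (l:ℝ) + 1 ≤ (k:ℝ) := by exact_mod_cast hs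
            rw [hFzero l t (Or.inr (by
              have h1 : ((l:ℝ)+1)/L ≤ (k:ℝ)/L := by gcongr
              have e : ((l:ℝ)+1)/L = (l:ℝ)/L + 1/L := by ring
              linarith))]
            ring
          · have hsR : (k:ℝ) + 2 ≤ (l:ℝ) := by exact_mod_cast hs
            rw [hFzero l t (Or.inl (by
              have h1 : ((k:ℝ)+2)/L ≤ (l:ℝ)/L := by gcongr
              have e : ((k:ℝ)+2)/L = ((k:ℝ)+1)/L + 1/L := by ring
              linarith))]
            ring
        rw [← Finset.sum_subset hsub hvan, Finset.sum_insert (by simp),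
          Finset.sum_singleton]
        push_cast
        ring
    rw [hpair]
    -- partition of unity at t
    have hFk : F k t = clamp01 (((k:ℝ)/L + a - t)/r) := by
      simp only [hF]
      exact clamp01_min_left ((one_le_div hr0).mpr (by linarith))
    have hFk1 : F (k+1) t = clamp01 ((t - (((k:ℝ)+1)/L - a))/r) := by
      simp only [hF]
      push_cast
      refine clamp01_min_right ((one_le_div hr0).mpr ?_)
      linarith
    have hsum1 : (((k:ℝ)/L + a - t)/r) + ((t - (((k:ℝ)+1)/L - a))/r) = 1 := by
      rw [← add_div,
        show ((k:ℝ)/L + a - t) + (t - (((k:ℝ)+1)/L - a)) = 2*a - 1/L by ring,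
        show 2*a - 1/(L:ℝ) = r by rw [ha, hr]; ring]
      exact div_self hr0.ne'
    have hpart : F k t + F (k+1) t = 1 := by
      rw [hFk, hFk1]; exact clamp01_add_one hsum1
    have hF1m := hFmem (k+1) t
    have h0eq : F k t = 1 - F (k+1) t := by linarith [hpart]
    rw [h0eq]
    exact bump_final hL0 hF1m.1 hF1m.2 hklt hkge
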